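/- arXiv:1710.05973 — 2 statements merged into one kernel-verified Lean document; each statement's English description precedes it below -/
import Mathlib

section
/- For ℓ₁, ℓ₂, ℓ₃ > 0, the Gaussian integral over (z₁,z₂) ∈ ℝ⁶ × ℝ⁶ of exp(−‖z₁‖²/ℓ₁ − ‖z₂‖²/ℓ₂ − ‖z₁+z₂‖²/ℓ₃) equals π⁶·(ℓ₁⁻¹ℓ₂⁻¹ + ℓ₁⁻¹ℓ₃⁻¹ + ℓ₂⁻¹ℓ₃⁻¹)^{−3}. -/
open MeasureTheory Real

lemma integrable_rexp_neg_mul_sq_norm' {V : Type*} [NormedAddCommGroup V] [InnerProductSpace ℝ V]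
    [FiniteDimensional ℝ V] [MeasurableSpace V] [BorelSpace V] {b : ℝ} (hb : 0 < b) :
    Integrable (fun v : V ↦ rexp (-b * ‖v‖ ^ 2)) := by
  have h := (GaussianFourier.integrable_cexp_neg_mul_sq_norm_add (b := (b : ℂ))
    (by simpa using hb) 0 (0 : V)).norm
  simpa [Complex.norm_exp, neg_mul, ← Complex.ofReal_pow,
    Complex.ofReal_re] using h

lemma complete_sq_aux (l1 l2 l3 x y p : ℝ) (h1 : 0 < l1) (h2 : 0 < l2) (h3 : 0 < l3) :
    -x/l1 - y/l2 - (x + 2*p + y)/l3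
      = -(l1⁻¹ + l2⁻¹*l3⁻¹/(l2⁻¹+l3⁻¹)) * x
        - (l2⁻¹+l3⁻¹) * (y + 2*(l3⁻¹/(l2⁻¹+l3⁻¹)*p) + (l3⁻¹/(l2⁻¹+l3⁻¹))^2*x) := by
  have hB : l2⁻¹ + l3⁻¹ ≠ 0 := by positivity
  field_simp
  ring

/-- The Gaussian integral over ℝ⁶ × ℝ⁶ appearing in the 3-vertex wheel weight. -/
theorem gaussian_integral_wheel (l1 l2 l3 : ℝ) (h1 : 0 < l1) (h2 : 0 < l2) (h3 : 0 < l3) :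
    (∫ z : EuclideanSpace ℝ (Fin 6) × EuclideanSpace ℝ (Fin 6),
        Real.exp (-‖z.1‖ ^ 2 / l1 - ‖z.2‖ ^ 2 / l2 - ‖z.1 + z.2‖ ^ 2 / l3)) =
      π ^ 6 * (l1⁻¹ * l2⁻¹ + l1⁻¹ * l3⁻¹ + l2⁻¹ * l3⁻¹) ^ (-3 : ℤ) := by
  have hl1 : l1 ≠ 0 := ne_of_gt h1
  have hl2 : l2 ≠ 0 := ne_of_gt h2
  have hl3 : l3 ≠ 0 := ne_of_gt h3
  have hBpos : (0:ℝ) < l2⁻¹ + l3⁻¹ := by positivity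
  set B : ℝ := l2⁻¹ + l3⁻¹ with hB
  have hBne : B ≠ 0 := ne_of_gt hBpos
  set A : ℝ := l1⁻¹ + l2⁻¹ * l3⁻¹ / B with hA
  have hApos : (0:ℝ) < A := by rw [hA]; positivity
  have hAne : A ≠ 0 := ne_of_gt hApos
  set c : ℝ := l3⁻¹ / B with hc
  -- pointwise identity (completing the square)
  have key : ∀ z1 z2 : EuclideanSpace ℝ (Fin 6),
      Real.exp (-‖z1‖ ^ 2 / l1 - ‖z2‖ ^ 2 / l2 - ‖z1 + z2‖ ^ 2 / l3)
      = Real.exp (-A * ‖z1‖ ^ 2) * Real.exp (-B * ‖z2 + c • z1‖ ^ 2) := by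
    intro z1 z2
    rw [← Real.exp_add]
    congr 1
    have e1 : ‖z1 + z2‖ ^ 2 = ‖z1‖ ^ 2 + 2 * inner ℝ z1 z2 + ‖z2‖ ^ 2 := norm_add_sq_real z1 z2
    have e2 : ‖z2 + c • z1‖ ^ 2
        = ‖z2‖ ^ 2 + 2 * (c * inner ℝ z1 z2) + c ^ 2 * ‖z1‖ ^ 2 := by
      rw [norm_add_sq_real, real_inner_smul_right, norm_smul, Real.norm_eq_abs, mul_pow, sq_abs,
        real_inner_comm]
    rw [e1, e2, hA, hB, hc]
    have := complete_sq_aux l1 l2 l3 (‖z1‖ ^ 2) (‖z2‖ ^ 2) (inner ℝ z1 z2) h1 h2 h3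
    linarith [this]
  -- integrability of the original integrand
  have hmeas : AEStronglyMeasurable
      (fun z : EuclideanSpace ℝ (Fin 6) × EuclideanSpace ℝ (Fin 6) ↦
        Real.exp (-‖z.1‖ ^ 2 / l1 - ‖z.2‖ ^ 2 / l2 - ‖z.1 + z.2‖ ^ 2 / l3)) volume := by
    apply Continuous.aestronglyMeasurable
    fun_prop
  have hint : Integrable
      (fun z : EuclideanSpace ℝ (Fin 6) × EuclideanSpace ℝ (Fin 6) ↦
        Real.exp (-‖z.1‖ ^ 2 / l1 - ‖z.2‖ ^ 2 / l2 - ‖z.1 + z.2‖ ^ 2 / l3)) volume := by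
    have hg : Integrable (fun z : EuclideanSpace ℝ (Fin 6) × EuclideanSpace ℝ (Fin 6) ↦
        Real.exp (-l1⁻¹ * ‖z.1‖ ^ 2) * Real.exp (-l2⁻¹ * ‖z.2‖ ^ 2)) volume := by
      have h := (integrable_rexp_neg_mul_sq_norm' (V := EuclideanSpace ℝ (Fin 6))
        (inv_pos.mpr h1)).mul_prod
        (integrable_rexp_neg_mul_sq_norm' (V := EuclideanSpace ℝ (Fin 6)) (inv_pos.mpr h2))
      exact h
    refine hg.mono' hmeas ?_
    filter_upwards with z
    rw [Real.norm_eq_abs, abs_of_pos (Real.exp_pos _), ← Real.exp_add]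
    apply Real.exp_le_exp.mpr
    have hle : 0 ≤ ‖z.1 + z.2‖ ^ 2 / l3 := by positivity
    have e1 : -‖z.1‖ ^ 2 / l1 = -l1⁻¹ * ‖z.1‖ ^ 2 := by field_simp
    have e2 : ‖z.2‖ ^ 2 / l2 = l2⁻¹ * ‖z.2‖ ^ 2 := by field_simp
    have e3 : -‖z.1‖ ^ 2 / l1 - ‖z.2‖ ^ 2 / l2 - ‖z.1 + z.2‖ ^ 2 / l3
        = -l1⁻¹ * ‖z.1‖ ^ 2 + -l2⁻¹ * ‖z.2‖ ^ 2 - ‖z.1 + z.2‖ ^ 2 / l3 := by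
      rw [e1, e2]; ring
    rw [e3]
    linarith
  -- rewrite the integrand
  have hrw : (∫ z : EuclideanSpace ℝ (Fin 6) × EuclideanSpace ℝ (Fin 6),
        Real.exp (-‖z.1‖ ^ 2 / l1 - ‖z.2‖ ^ 2 / l2 - ‖z.1 + z.2‖ ^ 2 / l3))
      = ∫ z : EuclideanSpace ℝ (Fin 6) × EuclideanSpace ℝ (Fin 6),
        Real.exp (-A * ‖z.1‖ ^ 2) * Real.exp (-B * ‖z.2 + c • z.1‖ ^ 2) := by
    congr 1; funext z; exact key z.1 z.2
  have hint' : Integrable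
      (fun z : EuclideanSpace ℝ (Fin 6) × EuclideanSpace ℝ (Fin 6) ↦
        Real.exp (-A * ‖z.1‖ ^ 2) * Real.exp (-B * ‖z.2 + c • z.1‖ ^ 2)) volume := by
    have h : (fun z : EuclideanSpace ℝ (Fin 6) × EuclideanSpace ℝ (Fin 6) ↦
        Real.exp (-A * ‖z.1‖ ^ 2) * Real.exp (-B * ‖z.2 + c • z.1‖ ^ 2))
        = fun z : EuclideanSpace ℝ (Fin 6) × EuclideanSpace ℝ (Fin 6) ↦
          Real.exp (-‖z.1‖ ^ 2 / l1 - ‖z.2‖ ^ 2 / l2 - ‖z.1 + z.2‖ ^ 2 / l3) := by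
      funext z; exact (key z.1 z.2).symm
    rw [h]; exact hint
  have hdim : ((Module.finrank ℝ (EuclideanSpace ℝ (Fin 6)) : ℝ) / 2) = ((3 : ℕ) : ℝ) := by
    simp [finrank_euclideanSpace]
    norm_num
  have gaussB : (∫ v : EuclideanSpace ℝ (Fin 6), Real.exp (-B * ‖v‖ ^ 2)) = (π / B) ^ 3 := by
    rw [GaussianFourier.integral_rexp_neg_mul_sq_norm hBpos, hdim, Real.rpow_natCast]
  have gaussA : (∫ v : EuclideanSpace ℝ (Fin 6), Real.exp (-A * ‖v‖ ^ 2)) = (π / A) ^ 3 := by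
    rw [GaussianFourier.integral_rexp_neg_mul_sq_norm hApos, hdim, Real.rpow_natCast]
  rw [hrw, MeasureTheory.Measure.volume_eq_prod, MeasureTheory.integral_prod _ hint']
  have inner_eq : ∀ z1 : EuclideanSpace ℝ (Fin 6),
      (∫ z2 : EuclideanSpace ℝ (Fin 6),
          Real.exp (-A * ‖z1‖ ^ 2) * Real.exp (-B * ‖z2 + c • z1‖ ^ 2))
        = Real.exp (-A * ‖z1‖ ^ 2) * (π / B) ^ 3 := by
    intro z1
    rw [MeasureTheory.integral_const_mul]
    congr 1
    rw [integral_add_right_eq_self (fun z2 : EuclideanSpace ℝ (Fin 6) ↦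
      Real.exp (-B * ‖z2‖ ^ 2)) (c • z1)]
    exact gaussB
  simp_rw [inner_eq]
  rw [MeasureTheory.integral_mul_const, gaussA]
  -- final algebra
  have hS : A * B = l1⁻¹ * l2⁻¹ + l1⁻¹ * l3⁻¹ + l2⁻¹ * l3⁻¹ := by
    rw [hA, hB]
    field_simp
  rw [show (-3 : ℤ) = -(3 : ℕ) by norm_num, zpow_neg, zpow_natCast, ← hS, div_pow, div_pow,
    mul_pow]
  field_simp
end

section
/- Define F(ε,L) = ∫_{[ε,L]³} (ℓ₁+ℓ₂+ℓ₃)^{−3} dℓ₁dℓ₂dℓ₃ for 0 < ε < L. Then the limit as ε → 0⁺ of F(ε,L)/log(1/ε) exists and equals 1/2; i.e., F(ε,L) = −(1/2)·log ε + O(1) as ε → 0⁺ for fixed L. -/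
open MeasureTheory Real Filter Topology intervalIntegral

noncomputable def T3 : ℝ × ℝ × ℝ ≃ᵐ (Fin 3 → ℝ) :=
  (MeasurableEquiv.prodCongr (MeasurableEquiv.refl ℝ) MeasurableEquiv.finTwoArrow.symm).trans
    (MeasurableEquiv.piFinSuccAbove (fun _ : Fin 3 => ℝ) 0).symm

lemma T3_mp : MeasurePreserving T3 volume volume :=
  ((volume_preserving_piFinSuccAbove (fun _ : Fin 3 => ℝ) 0).symm).comp
    ((MeasurePreserving.id volume).prod (volume_preserving_finTwoArrow ℝ).symm)

lemma T3_apply (p : ℝ × ℝ × ℝ) : T3 p = ![p.1, p.2.1, p.2.2] := by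
  funext i
  fin_cases i <;> rfl

lemma box_eq (ε L : ℝ) : T3 ⁻¹' (Set.univ.pi fun _ => Set.Icc ε L)
    = (Set.Icc ε L) ×ˢ ((Set.Icc ε L) ×ˢ (Set.Icc ε L)) := by
  ext p
  simp only [Set.mem_preimage, Set.mem_pi, Set.mem_univ, forall_true_left, T3_apply,
    Fin.forall_fin_succ, Set.mem_prod, Matrix.cons_val_zero, Matrix.cons_val_succ,
    Fin.cons_zero, Fin.cons_succ]
  simp [Fin.forall_fin_zero_pi, and_assoc]

lemma cube_int (c : ℝ) {a b : ℝ} (ha : 0 < c + a) (hab : a ≤ b) :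
    ∫ t in a..b, ((c + t) ^ 3)⁻¹ = (((c + a) ^ 2)⁻¹ - ((c + b) ^ 2)⁻¹) / 2 := by
  have hb : 0 < c + b := by linarith
  have h1 : ∀ t : ℝ, ((c + t) ^ 3)⁻¹ = (fun u : ℝ => u ^ (-3 : ℤ)) (t + c) := by
    intro t
    show ((c + t) ^ 3)⁻¹ = (t + c) ^ (-3 : ℤ)
    rw [add_comm t c]
    rw [zpow_neg]; norm_cast
  calc ∫ t in a..b, ((c + t) ^ 3)⁻¹ = ∫ t in a..b, (fun u : ℝ => u ^ (-3 : ℤ)) (t + c) := by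
        simp_rw [h1]
    _ = ∫ u in (a + c)..(b + c), u ^ (-3 : ℤ) :=
        integral_comp_add_right (fun u : ℝ => u ^ (-3 : ℤ)) c
    _ = (((c + a) ^ 2)⁻¹ - ((c + b) ^ 2)⁻¹) / 2 := by
        rw [integral_zpow (Or.inr ⟨by norm_num,
          Set.notMem_uIcc_of_lt (by linarith) (by linarith)⟩)]
        have h2 : ∀ x : ℝ, x ^ (-3 + 1 : ℤ) = (x ^ 2)⁻¹ := fun x => by
          rw [show (-3 + 1 : ℤ) = -2 by norm_num, zpow_neg]; norm_cast
        rw [h2, h2]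
        push_cast
        ring

lemma sq_int (c : ℝ) {a b : ℝ} (ha : 0 < c + a) (hab : a ≤ b) :
    ∫ t in a..b, ((c + t) ^ 2)⁻¹ = (c + a)⁻¹ - (c + b)⁻¹ := by
  have hb : 0 < c + b := by linarith
  have h1 : ∀ t : ℝ, ((c + t) ^ 2)⁻¹ = (fun u : ℝ => u ^ (-2 : ℤ)) (t + c) := by
    intro t
    show ((c + t) ^ 2)⁻¹ = (t + c) ^ (-2 : ℤ)
    rw [add_comm t c]
    rw [zpow_neg]; norm_cast
  calc ∫ t in a..b, ((c + t) ^ 2)⁻¹ = ∫ t in a..b, (fun u : ℝ => u ^ (-2 : ℤ)) (t + c) := by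
        simp_rw [h1]
    _ = ∫ u in (a + c)..(b + c), u ^ (-2 : ℤ) :=
        integral_comp_add_right (fun u : ℝ => u ^ (-2 : ℤ)) c
    _ = (c + a)⁻¹ - (c + b)⁻¹ := by
        rw [integral_zpow (Or.inr ⟨by norm_num,
          Set.notMem_uIcc_of_lt (by linarith) (by linarith)⟩)]
        have h2 : ∀ x : ℝ, x ^ (-2 + 1 : ℤ) = x⁻¹ := fun x => by
          rw [show (-2 + 1 : ℤ) = -1 by norm_num, zpow_neg, zpow_one]
        rw [h2, h2]
        push_cast
        rw [add_comm a c, add_comm b c]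
        ring

lemma lin_int (c : ℝ) {a b : ℝ} (ha : 0 < c + a) (hab : a ≤ b) :
    ∫ t in a..b, (c + t)⁻¹ = Real.log (c + b) - Real.log (c + a) := by
  have hb : 0 < c + b := by linarith
  calc ∫ t in a..b, (c + t)⁻¹ = ∫ t in a..b, (fun u : ℝ => u⁻¹) (t + c) := by
        simp_rw [add_comm]
    _ = ∫ u in (a + c)..(b + c), u⁻¹ := integral_comp_add_right (fun u : ℝ => u⁻¹) c
    _ = Real.log ((b + c) / (a + c)) :=
        integral_inv (Set.notMem_uIcc_of_lt (by linarith) (by linarith))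
    _ = Real.log (c + b) - Real.log (c + a) := by
        rw [Real.log_div (by linarith) (by linarith), add_comm b c, add_comm a c]

lemma ii_sq (c : ℝ) {a b : ℝ} (ha : 0 < c + a) (hab : a ≤ b) :
    IntervalIntegrable (fun t : ℝ => ((c + t) ^ 2)⁻¹) volume a b := by
  apply ContinuousOn.intervalIntegrable
  apply ContinuousOn.inv₀ (by fun_prop)
  intro t ht
  rw [Set.uIcc_of_le hab] at ht
  have : 0 < c + t := by linarith [ht.1]
  positivity

lemma ii_inv (c : ℝ) {a b : ℝ} (ha : 0 < c + a) (hab : a ≤ b) :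
    IntervalIntegrable (fun t : ℝ => (c + t)⁻¹) volume a b := by
  apply ContinuousOn.intervalIntegrable
  apply ContinuousOn.inv₀ (by fun_prop)
  intro t ht
  rw [Set.uIcc_of_le hab] at ht
  have : 0 < c + t := by linarith [ht.1]
  positivity

lemma F_eq (L : ℝ) {ε : ℝ} (hε : 0 < ε) (hεL : ε ≤ L) :
    (∫ ℓ : Fin 3 → ℝ in Set.univ.pi fun _ => Set.Icc ε L, ((ℓ 0 + ℓ 1 + ℓ 2) ^ 3)⁻¹)
      = (3/2) * Real.log (2*ε + L) - (1/2) * Real.log (3*ε)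
        - (3/2) * Real.log (ε + 2*L) + (1/2) * Real.log (3*L) := by
  have hL : 0 < L := lt_of_lt_of_le hε hεL
  -- integrability on the triple box
  have hI : IntegrableOn (fun p : ℝ × ℝ × ℝ => ((p.1 + p.2.1 + p.2.2) ^ 3)⁻¹)
      ((Set.Icc ε L) ×ˢ ((Set.Icc ε L) ×ˢ (Set.Icc ε L))) volume := by
    apply ContinuousOn.integrableOn_compact
      (isCompact_Icc.prod (isCompact_Icc.prod isCompact_Icc))
    apply ContinuousOn.inv₀ (by fun_prop)
    rintro p ⟨h1, h2, h3⟩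
    have : 0 < p.1 + p.2.1 + p.2.2 := by
      have := h1.1; have := h2.1; have := h3.1; linarith
    positivity
  have hI2 : ∀ x ∈ Set.Icc ε L,
      IntegrableOn (fun q : ℝ × ℝ => ((x + q.1 + q.2) ^ 3)⁻¹)
        ((Set.Icc ε L) ×ˢ (Set.Icc ε L)) volume := by
    intro x hx
    apply ContinuousOn.integrableOn_compact (isCompact_Icc.prod isCompact_Icc)
    apply ContinuousOn.inv₀ (by fun_prop)
    rintro q ⟨h1, h2⟩
    have : 0 < x + q.1 + q.2 := by
      have := hx.1; have := h1.1; have := h2.1; linarith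
    positivity
  calc (∫ ℓ : Fin 3 → ℝ in Set.univ.pi fun _ => Set.Icc ε L, ((ℓ 0 + ℓ 1 + ℓ 2) ^ 3)⁻¹)
      = ∫ p : ℝ × ℝ × ℝ in (Set.Icc ε L) ×ˢ ((Set.Icc ε L) ×ˢ (Set.Icc ε L)),
          ((p.1 + p.2.1 + p.2.2) ^ 3)⁻¹ := by
        rw [← T3_mp.setIntegral_preimage_emb (MeasurableEquiv.measurableEmbedding T3), box_eq]
        refine setIntegral_congr_fun (by measurability) fun p _ => ?_
        simp [T3_apply]
    _ = ∫ x in Set.Icc ε L, ∫ q : ℝ × ℝ in (Set.Icc ε L) ×ˢ (Set.Icc ε L),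
          ((x + q.1 + q.2) ^ 3)⁻¹ := by
        rw [Measure.volume_eq_prod] at hI ⊢
        exact setIntegral_prod _ hI
    _ = ∫ x in Set.Icc ε L, ((1/2) * ((x+ε+ε)⁻¹ - (x+ε+L)⁻¹)
          - (1/2) * ((x+L+ε)⁻¹ - (x+L+L)⁻¹)) := by
        refine setIntegral_congr_fun measurableSet_Icc fun x hx => ?_
        have hx1 : ε ≤ x := hx.1
        rw [Measure.volume_eq_prod, setIntegral_prod _ (by
          have := hI2 x hx; rwa [Measure.volume_eq_prod] at this)]
        have inner : ∀ y ∈ Set.Icc ε L,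
            (∫ z in Set.Icc ε L, ((x + y + z) ^ 3)⁻¹)
              = (1/2) * (((x+y+ε)^2)⁻¹) - (1/2) * (((x+y+L)^2)⁻¹) := by
          intro y hy
          rw [integral_Icc_eq_integral_Ioc, ← intervalIntegral.integral_of_le hεL,
            cube_int (x + y) (by have := hy.1; linarith) hεL]
          ring
        rw [setIntegral_congr_fun measurableSet_Icc inner,
          integral_Icc_eq_integral_Ioc, ← intervalIntegral.integral_of_le hεL]
        have e1 : (∫ y in ε..L, ((1:ℝ)/2) * (((x+y+ε)^2)⁻¹) - (1/2) * (((x+y+L)^2)⁻¹))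
            = ∫ y in ε..L, ((1:ℝ)/2) * ((((x+ε)+y)^2)⁻¹) - (1/2) * ((((x+L)+y)^2)⁻¹) := by
          refine intervalIntegral.integral_congr fun y _ => ?_
          ring_nf
        rw [e1, intervalIntegral.integral_sub
            (((ii_sq (x+ε) (by linarith) hεL)).const_mul _)
            (((ii_sq (x+L) (by linarith) hεL)).const_mul _),
          intervalIntegral.integral_const_mul, intervalIntegral.integral_const_mul,
          sq_int (x+ε) (by linarith) hεL, sq_int (x+L) (by linarith) hεL]
    _ = (3/2) * Real.log (2*ε + L) - (1/2) * Real.log (3*ε)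
        - (3/2) * Real.log (ε + 2*L) + (1/2) * Real.log (3*L) := by
        rw [integral_Icc_eq_integral_Ioc, ← intervalIntegral.integral_of_le hεL]
        have e2 : (∫ x in ε..L, ((1:ℝ)/2) * ((x+ε+ε)⁻¹ - (x+ε+L)⁻¹)
              - (1/2) * ((x+L+ε)⁻¹ - (x+L+L)⁻¹))
            = ∫ x in ε..L, (((1:ℝ)/2) * (((ε+ε)+x)⁻¹) - ((ε+L)+x)⁻¹)
              + (1/2) * (((L+L)+x)⁻¹) := by
          refine intervalIntegral.integral_congr fun x _ => ?_
          have a1 : x+ε+ε = (ε+ε)+x := by ring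
          have a2 : x+ε+L = (ε+L)+x := by ring
          have a3 : x+L+ε = (ε+L)+x := by ring
          have a4 : x+L+L = (L+L)+x := by ring
          rw [a1, a2, a3, a4]; ring
        rw [e2, intervalIntegral.integral_add
            (((ii_inv (ε+ε) (by linarith) hεL).const_mul _).sub (ii_inv (ε+L) (by linarith) hεL))
            ((ii_inv (L+L) (by linarith) hεL).const_mul _),
          intervalIntegral.integral_sub
            ((ii_inv (ε+ε) (by linarith) hεL).const_mul _) (ii_inv (ε+L) (by linarith) hεL),
          intervalIntegral.integral_const_mul, intervalIntegral.integral_const_mul,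
          lin_int (ε+ε) (by linarith) hεL, lin_int (ε+L) (by linarith) hεL,
          lin_int (L+L) (by linarith) hεL]
        have b1 : ε+ε+L = 2*ε+L := by ring
        have b2 : ε+ε+ε = 3*ε := by ring
        have b3 : ε+L+L = ε+2*L := by ring
        have b4 : ε+L+ε = 2*ε+L := by ring
        have b5 : L+L+L = 3*L := by ring
        have b6 : L+L+ε = ε+2*L := by ring
        rw [b1, b2, b3, b4, b5, b6]
        ring

/-- The logarithmic UV divergence of the 3-vertex wheel weight: the integral of
`(ℓ₁+ℓ₂+ℓ₃)⁻³` over `[ε,L]³` behaves as `(1/2)·log(1/ε)` as `ε → 0⁺`. -/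
theorem wheel3_log_divergence (L : ℝ) (hL : 0 < L) :
    Tendsto
      (fun ε : ℝ =>
        (∫ ℓ : Fin 3 → ℝ in Set.univ.pi fun _ => Set.Icc ε L,
          ((ℓ 0 + ℓ 1 + ℓ 2) ^ 3)⁻¹) / Real.log (1 / ε))
      (𝓝[>] 0) (𝓝 (1 / 2)) := by
  set g : ℝ → ℝ := fun ε =>
    (3/2) * Real.log (2*ε + L) - (1/2) * Real.log 3
      - (3/2) * Real.log (ε + 2*L) + (1/2) * Real.log (3*L) with hg
  have hδ : 0 < min 1 L := lt_min one_pos hL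
  have hmem : Set.Ioo (0:ℝ) (min 1 L) ∈ 𝓝[>] (0:ℝ) := Ioo_mem_nhdsGT_of_mem ⟨le_rfl, hδ⟩
  have heq : ∀ ε ∈ Set.Ioo (0:ℝ) (min 1 L),
      (∫ ℓ : Fin 3 → ℝ in Set.univ.pi fun _ => Set.Icc ε L,
        ((ℓ 0 + ℓ 1 + ℓ 2) ^ 3)⁻¹) / Real.log (1 / ε)
      = 1/2 + g ε * (Real.log (1/ε))⁻¹ := by
    intro ε hε
    have hε0 : 0 < ε := hε.1
    have hε1 : ε < 1 := lt_of_lt_of_le hε.2 (min_le_left _ _)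
    have hεL : ε ≤ L := le_of_lt (lt_of_lt_of_le hε.2 (min_le_right _ _))
    have hD : 0 < Real.log (1/ε) := Real.log_pos (by rw [one_div]; exact one_lt_inv_iff₀.mpr ⟨hε0, hε1⟩)
    have hF : (∫ ℓ : Fin 3 → ℝ in Set.univ.pi fun _ => Set.Icc ε L,
        ((ℓ 0 + ℓ 1 + ℓ 2) ^ 3)⁻¹) = (1/2) * Real.log (1/ε) + g ε := by
      rw [F_eq L hε0 hεL, hg]
      have hl : Real.log (3*ε) = Real.log 3 + Real.log ε := Real.log_mul (by norm_num) hε0.ne'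
      have hinv : Real.log (1/ε) = -Real.log ε := by rw [one_div, Real.log_inv]
      rw [hl, hinv]
      ring
    rw [hF]
    field_simp
  refine Tendsto.congr' (eventuallyEq_of_mem hmem fun ε hε => (heq ε hε).symm) ?_
  have h1 : Tendsto (fun ε : ℝ => Real.log (1/ε)) (𝓝[>] 0) atTop := by
    refine Real.tendsto_log_atTop.comp ?_
    exact tendsto_inv_nhdsGT_zero.congr fun x => (one_div x).symm
  have h2 : Tendsto (fun ε : ℝ => (Real.log (1/ε))⁻¹) (𝓝[>] 0) (𝓝 0) :=
    h1.inv_tendsto_atTop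
  have h3 : ContinuousAt g 0 := by
    have c1 : ContinuousAt (fun ε : ℝ => Real.log (2*ε + L)) 0 :=
      (Real.continuousAt_log (by norm_num [hL.ne'])).comp (by fun_prop)
    have c2 : ContinuousAt (fun ε : ℝ => Real.log (ε + 2*L)) 0 :=
      (Real.continuousAt_log (by norm_num; positivity)).comp (by fun_prop)
    exact (((c1.const_mul _).sub continuousAt_const).sub (c2.const_mul _)).add continuousAt_const
  have h4 : Tendsto g (𝓝[>] 0) (𝓝 (g 0)) :=
    (h3.tendsto).mono_left nhdsWithin_le_nhds
  have h5 : Tendsto (fun ε : ℝ => 1/2 + g ε * (Real.log (1/ε))⁻¹) (𝓝[>] 0)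
      (𝓝 (1/2 + g 0 * 0)) := Tendsto.add tendsto_const_nhds (h4.mul h2)
  simpa using h5
end
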